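/- arXiv:0705.3372 — 3 statements merged into one kernel-verified Lean document; each statement's English description precedes it below -/
import Mathlib

section
/- Let k be a number field, p a prime number, S a finite set of nonzero primes of O_k, and 𝔭 a nonzero prime of O_k with 𝔭 ∉ S. Then V_{S∪{𝔭}}(k) is contained in V_S(k), and the map sending the class of a ∈ k^× representing an element of V_S(k) to the class of u in O_𝔭^×/(O_𝔭^×)^p, where a = u·b^p is any factorization in k_𝔭^× with u ∈ O_𝔭^× and b ∈ k_𝔭^× (such a factorization exists because p divides the 𝔭-adic valuation of a), is a well-defined group homomorphism V_S(k) → O_𝔭^×/(O_𝔭^×)^p whose kernel is exactly V_{S∪{𝔭}}(k). In particular V_S(k)/V_{S∪{𝔭}}(k) embeds into O_𝔭^×/(O_𝔭^×)^p. -/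
open NumberField IsDedekindDomain

/-- The subgroup of `p`-th powers in a commutative group `G`. -/
def pPowers (G : Type*) [CommGroup G] (p : ℕ) : Subgroup G :=
  (powMonoidHom p : G →* G).range

/-- The map `k^× → (k_v)^×` into the units of the `v`-adic completion. -/
noncomputable def localUnitsMap (k : Type*) [Field k] [NumberField k]
    (v : HeightOneSpectrum (𝓞 k)) : kˣ →* (v.adicCompletion k)ˣ :=
  Units.map (algebraMap k (v.adicCompletion k)).toMonoidHom

/-- The `v`-adic valuation of a nonzero element of `k`, as an element of
`Multiplicative ℤ` (a uniformizer is sent to `ofAdd (-1)`). -/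
noncomputable def mulValHom (k : Type*) [Field k] [NumberField k]
    (v : HeightOneSpectrum (𝓞 k)) : kˣ →* Multiplicative ℤ :=
  (WithZero.unitsWithZeroEquiv.toMonoidHom).comp
    (Units.map ((v.valuation (K := k)).toMonoidWithZeroHom.toMonoidHom))

/-- The normalized additive `v`-adic valuation `v(a) ∈ ℤ` of `a ∈ k^×`
(a uniformizer has valuation `1`). -/
noncomputable def addVal (k : Type*) [Field k] [NumberField k]
    (v : HeightOneSpectrum (𝓞 k)) (a : kˣ) : ℤ :=
  - Multiplicative.toAdd (mulValHom k v a)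

/-- The additive `v`-adic valuation modulo `p`, as a group homomorphism. -/
noncomputable def valModP (k : Type*) [Field k] [NumberField k] (p : ℕ)
    (v : HeightOneSpectrum (𝓞 k)) : kˣ →* Multiplicative (ZMod p) :=
  (AddMonoidHom.toMultiplicative (Int.castAddHom (ZMod p))).comp (mulValHom k v)

/-- The subgroup of those `a ∈ k^×` which are `p`-th powers in the completion `k_v`. -/
noncomputable def locallyPthPower (k : Type*) [Field k] [NumberField k] (p : ℕ)
    (v : HeightOneSpectrum (𝓞 k)) : Subgroup kˣ :=
  Subgroup.comap (localUnitsMap k v) (pPowers (v.adicCompletion k)ˣ p)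

/-- The subgroup of those `a ∈ k^×` which are `p`-th powers in `k_v` for all `v ∈ S` and
whose `v`-adic valuation is divisible by `p` for every nonzero prime `v ∉ S`. -/
noncomputable def VSpre (k : Type*) [Field k] [NumberField k] (p : ℕ)
    (S : Set (HeightOneSpectrum (𝓞 k))) : Subgroup kˣ :=
  (⨅ v ∈ S, locallyPthPower k p v) ⊓ (⨅ v ∈ Sᶜ, (valModP k p v).ker)

/-- The Kummer group `V_S(k)`, the subgroup of `k^×/(k^×)^p` consisting of the classes of
those `a ∈ k^×` which are `p`-th powers in `k_v` for every `v ∈ S` and whose `v`-adic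
valuation is divisible by `p` for every nonzero prime `v ∉ S`. -/
noncomputable def VS (k : Type*) [Field k] [NumberField k] (p : ℕ)
    (S : Set (HeightOneSpectrum (𝓞 k))) : Subgroup (kˣ ⧸ pPowers kˣ p) :=
  (VSpre k p S).map (QuotientGroup.mk' (pPowers kˣ p))

open scoped Multiplicative WithZero

section Aux
variable {k : Type} [Field k] [NumberField k] (p : ℕ) (𝔭 : HeightOneSpectrum (𝓞 k))

local notation "K" => 𝔭.adicCompletion k
local notation "O" => 𝔭.adicCompletionIntegers k

/-- units valuation on the completion -/
noncomputable def wval : Kˣ →* Multiplicative ℤ :=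
  (WithZero.unitsWithZeroEquiv.toMonoidHom).comp
    (Units.map ((Valued.v : Valuation K ℤᵐ⁰).toMonoidWithZeroHom.toMonoidHom))

lemma coe_uwze (u : ℤᵐ⁰ˣ) :
    ((WithZero.unitsWithZeroEquiv u : Multiplicative ℤ) : ℤᵐ⁰) = (u : ℤᵐ⁰) := by
  simp [WithZero.unitsWithZeroEquiv]

lemma coe_wval (x : Kˣ) : ((wval 𝔭 x : Multiplicative ℤ) : ℤᵐ⁰) = Valued.v (x : K) := by
  simp [wval, coe_uwze]

lemma coe_mulValHom (a : kˣ) :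
    ((mulValHom k 𝔭 a : Multiplicative ℤ) : ℤᵐ⁰) = 𝔭.valuation k (a : k) := by
  simp [mulValHom, coe_uwze]

lemma coe_localUnitsMap (a : kˣ) :
    ((localUnitsMap k 𝔭 a : Kˣ) : K) = algebraMap k K (a : k) := rfl

lemma wval_localUnitsMap (a : kˣ) : wval 𝔭 (localUnitsMap k 𝔭 a) = mulValHom k 𝔭 a := by
  have : ((wval 𝔭 (localUnitsMap k 𝔭 a) : Multiplicative ℤ) : ℤᵐ⁰)
      = ((mulValHom k 𝔭 a : Multiplicative ℤ) : ℤᵐ⁰) := by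
    rw [coe_wval, coe_mulValHom, coe_localUnitsMap,
      show (algebraMap k K ((a : kˣ) : k)) = (((a : kˣ) : k) : K) from
        congrFun (IsDedekindDomain.HeightOneSpectrum.algebraMap_adicCompletion (R := 𝓞 k) k 𝔭) _,
      IsDedekindDomain.HeightOneSpectrum.valuedAdicCompletion_eq_valuation']
  exact_mod_cast this

/-- The inclusion `Oˣ →* Kˣ`. -/
noncomputable def injU : Oˣ →* Kˣ :=
  ((𝔭.adicCompletionIntegers k).unitGroup.subtype).comp
    (𝔭.adicCompletionIntegers k).unitGroupMulEquiv.symm.toMonoidHom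

lemma injU_injective : Function.Injective (injU (k := k) 𝔭) :=
  (Subgroup.subtype_injective _).comp
    (𝔭.adicCompletionIntegers k).unitGroupMulEquiv.symm.injective

lemma coe_injU (u : Oˣ) : ((injU 𝔭 u : Kˣ) : K) = ((u : O) : K) :=
  ValuationSubring.coe_unitGroupMulEquiv_symm_apply _ u

lemma val_injU (u : Oˣ) : Valued.v ((injU 𝔭 u : Kˣ) : K) = 1 :=
  (Valuation.mem_unitGroup_iff (v := (Valued.v : Valuation K ℤᵐ⁰)) (x := _)).mp
    ((𝔭.adicCompletionIntegers k).unitGroupMulEquiv.symm u).2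

lemma wval_injU (u : Oˣ) : wval 𝔭 (injU 𝔭 u) = 1 := by
  have : ((wval 𝔭 (injU 𝔭 u) : Multiplicative ℤ) : ℤᵐ⁰) = ((1 : Multiplicative ℤ) : ℤᵐ⁰) := by
    rw [coe_wval, val_injU]; rfl
  exact_mod_cast this

lemma exists_injU {x : Kˣ} (h : wval 𝔭 x = 1) : ∃ u : Oˣ, injU 𝔭 u = x := by
  have hv : Valued.v (x : K) = 1 := by
    rw [← coe_wval, h]; rfl
  refine ⟨(𝔭.adicCompletionIntegers k).unitGroupMulEquiv
    ⟨x, (Valuation.mem_unitGroup_iff (v := (Valued.v : Valuation K ℤᵐ⁰)) (x := _)).mpr hv⟩, ?_⟩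
  simp [injU]


lemma multint_pow_eq_one (hp : p ≠ 0) {g : Multiplicative ℤ} (h : g ^ p = 1) : g = 1 := by
  have h2 : (p : ℤ) * Multiplicative.toAdd g = 0 := by
    have := congrArg Multiplicative.toAdd h
    simpa [nsmul_eq_mul] using this
  rcases mul_eq_zero.mp h2 with h3 | h3
  · exact absurd (by exact_mod_cast h3) hp
  · exact Multiplicative.toAdd.injective (by simpa using h3)

lemma mem_ker_valModP_iff (a : kˣ) :
    a ∈ (valModP k p 𝔭).ker ↔ (p : ℤ) ∣ Multiplicative.toAdd (mulValHom k 𝔭 a) := by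
  rw [MonoidHom.mem_ker, valModP, MonoidHom.comp_apply,
    ← ZMod.intCast_zmod_eq_zero_iff_dvd]
  constructor
  · intro h; exact congrArg Multiplicative.toAdd h
  · intro h; exact Multiplicative.toAdd.injective h

lemma exists_fact (hp : p ≠ 0) (a : kˣ)
    (ha : (p : ℤ) ∣ Multiplicative.toAdd (mulValHom k 𝔭 a)) :
    ∃ (u : Oˣ) (b : Kˣ), localUnitsMap k 𝔭 a = injU 𝔭 u * b ^ p := by
  obtain ⟨m, hm⟩ := ha
  obtain ⟨π0, hπ0⟩ := 𝔭.valuation_exists_uniformizer k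
  have hπ0ne : π0 ≠ 0 := by
    intro h; rw [h, map_zero] at hπ0; exact WithZero.zero_ne_coe hπ0
  set π : kˣ := Units.mk0 π0 hπ0ne with hπdef
  have hπ : mulValHom k 𝔭 π = Multiplicative.ofAdd (-1 : ℤ) := by
    have h2 : ((mulValHom k 𝔭 π : Multiplicative ℤ) : ℤᵐ⁰)
        = ((Multiplicative.ofAdd (-1 : ℤ) : Multiplicative ℤ) : ℤᵐ⁰) := by
      rw [coe_mulValHom]; exact_mod_cast hπ0
    exact_mod_cast h2
  set b : Kˣ := (localUnitsMap k 𝔭 π) ^ (-m) with hbdef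
  set u0 : Kˣ := localUnitsMap k 𝔭 a * (b ^ p)⁻¹ with hu0def
  have h0 : Multiplicative.toAdd (wval 𝔭 u0) = 0 := by
    simp only [hu0def, hbdef, map_mul, map_inv, map_pow, map_zpow, wval_localUnitsMap,
      hπ, toAdd_mul, toAdd_inv, toAdd_pow, toAdd_zpow, toAdd_ofAdd, hm, smul_eq_mul]
    push_cast
    ring
  have h1 : wval 𝔭 u0 = 1 := Multiplicative.toAdd.injective (by simpa using h0)
  obtain ⟨u, hu⟩ := exists_injU 𝔭 h1
  exact ⟨u, b, by rw [hu, hu0def, inv_mul_cancel_right]⟩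

lemma uniq_class (hp : p ≠ 0) {u u' : Oˣ} {b b' : Kˣ}
    (h : injU 𝔭 u * b ^ p = injU 𝔭 u' * b' ^ p) :
    (QuotientGroup.mk u : Oˣ ⧸ pPowers Oˣ p) = QuotientGroup.mk u' := by
  have h2 : injU 𝔭 u = injU 𝔭 u' * b' ^ p * (b ^ p)⁻¹ := by
    rw [eq_mul_inv_iff_mul_eq]; exact h
  have key : injU 𝔭 (u'⁻¹ * u) = (b' * b⁻¹) ^ p := by
    rw [map_mul, map_inv, mul_pow, inv_pow, inv_mul_eq_iff_eq_mul, ← mul_assoc]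
    exact h2
  have hw : wval 𝔭 (b' * b⁻¹) = 1 := by
    have h0 : (wval 𝔭 (b' * b⁻¹)) ^ p = 1 := by
      rw [← map_pow, ← key, wval_injU]
    exact multint_pow_eq_one p hp h0
  obtain ⟨w, hwv⟩ := exists_injU 𝔭 hw
  have hwp : u'⁻¹ * u = w ^ p := injU_injective 𝔭 (by rw [map_pow, hwv, key])
  symm
  rw [QuotientGroup.eq]
  exact ⟨w, hwp.symm⟩


lemma pPowers_le_ker : pPowers kˣ p ≤ (valModP k p 𝔭).ker := by
  rintro x ⟨c, rfl⟩
  rw [mem_ker_valModP_iff]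
  exact ⟨Multiplicative.toAdd (mulValHom k 𝔭 c), by
    simp [powMonoidHom_apply, map_pow, toAdd_pow, smul_eq_mul]⟩

lemma locallyPthPower_le_ker : locallyPthPower k p 𝔭 ≤ (valModP k p 𝔭).ker := by
  intro a ha
  obtain ⟨d, hd⟩ := ha
  rw [mem_ker_valModP_iff]
  refine ⟨Multiplicative.toAdd (wval 𝔭 d), ?_⟩
  rw [← wval_localUnitsMap, ← hd]
  simp [powMonoidHom_apply, map_pow, toAdd_pow, smul_eq_mul]

lemma mem_VSpre_iff {T : Set (HeightOneSpectrum (𝓞 k))} {a : kˣ} :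
    a ∈ VSpre k p T ↔ (∀ v ∈ T, a ∈ locallyPthPower k p v) ∧
      ∀ v ∈ Tᶜ, a ∈ (valModP k p v).ker := by
  simp [VSpre, Subgroup.mem_inf, Subgroup.mem_iInf]

lemma main_uniq (hp : p ≠ 0) {a a' : kˣ}
    (hq : (QuotientGroup.mk a : kˣ ⧸ pPowers kˣ p) = QuotientGroup.mk a')
    {u u' : Oˣ} {b b' : Kˣ}
    (h : localUnitsMap k 𝔭 a = injU 𝔭 u * b ^ p)
    (h' : localUnitsMap k 𝔭 a' = injU 𝔭 u' * b' ^ p) :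
    (QuotientGroup.mk u : Oˣ ⧸ pPowers Oˣ p) = QuotientGroup.mk u' := by
  obtain ⟨c, hc⟩ := QuotientGroup.eq.mp hq
  have ha' : a' = a * c ^ p := by
    have : powMonoidHom p c = a⁻¹ * a' := hc
    rw [powMonoidHom_apply] at this
    rw [this, mul_inv_cancel_left]
  refine uniq_class p 𝔭 hp (b := b * localUnitsMap k 𝔭 c) (b' := b') ?_
  rw [← h', ha', map_mul, map_pow, h, mul_pow, mul_assoc]

end Aux

/-- `V_{S∪{𝔭}}(k) ⊆ V_S(k)`; for `a` representing a class in `V_S(k)` there is a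
factorization `a = u·b^p` in `k_𝔭` with `u ∈ O_𝔭^×`; sending the class of `a` to the class of
`u` is a well-defined homomorphism `V_S(k) → O_𝔭^×/(O_𝔭^×)^p` with kernel exactly
`V_{S∪{𝔭}}(k)`. -/
theorem statement3 (k : Type) [Field k] [NumberField k] (p : ℕ) (hp : p.Prime)
    (S : Finset (HeightOneSpectrum (𝓞 k))) (𝔭 : HeightOneSpectrum (𝓞 k)) (h𝔭 : 𝔭 ∉ S) :
    VS k p (insert 𝔭 ↑S) ≤ VS k p ↑S ∧
    (∀ a : kˣ, (QuotientGroup.mk a : kˣ ⧸ pPowers kˣ p) ∈ VS k p ↑S →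
      ∃ (u : (𝔭.adicCompletionIntegers k)ˣ) (b : (𝔭.adicCompletion k)ˣ),
        algebraMap k (𝔭.adicCompletion k) (a : k)
          = ((u : 𝔭.adicCompletionIntegers k) : 𝔭.adicCompletion k)
            * (b : 𝔭.adicCompletion k) ^ p) ∧
    ∃ φ : VS k p ↑S →*
        ((𝔭.adicCompletionIntegers k)ˣ ⧸ pPowers (𝔭.adicCompletionIntegers k)ˣ p),
      (∀ (a : kˣ) (h : (QuotientGroup.mk a : kˣ ⧸ pPowers kˣ p) ∈ VS k p ↑S)
          (u : (𝔭.adicCompletionIntegers k)ˣ) (b : (𝔭.adicCompletion k)ˣ),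
        algebraMap k (𝔭.adicCompletion k) (a : k)
          = ((u : 𝔭.adicCompletionIntegers k) : 𝔭.adicCompletion k)
            * (b : 𝔭.adicCompletion k) ^ p →
        φ ⟨QuotientGroup.mk a, h⟩ = QuotientGroup.mk u) ∧
      ∀ x : VS k p ↑S, φ x = 1 ↔ (x : kˣ ⧸ pPowers kˣ p) ∈ VS k p (insert 𝔭 ↑S) := by
  classical
  have hp0 : p ≠ 0 := hp.ne_zero
  have h𝔭c : 𝔭 ∈ ((↑S : Set (HeightOneSpectrum (𝓞 k))))ᶜ := by simpa using h𝔭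
  have hVSpre_ker : ∀ a : kˣ, a ∈ VSpre k p ↑S → a ∈ (valModP k p 𝔭).ker := fun a ha =>
    ((mem_VSpre_iff p).mp ha).2 𝔭 h𝔭c
  have hVS_ker : ∀ a : kˣ, (QuotientGroup.mk a : kˣ ⧸ pPowers kˣ p) ∈ VS k p ↑S →
      a ∈ (valModP k p 𝔭).ker := by
    intro a ha
    obtain ⟨a', ha', hq⟩ := Subgroup.mem_map.mp ha
    have h1 : a' ∈ (valModP k p 𝔭).ker := hVSpre_ker a' ha'
    have h2 : a'⁻¹ * a ∈ pPowers kˣ p := QuotientGroup.eq.mp hq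
    have h3 := Subgroup.mul_mem _ h1 (pPowers_le_ker p 𝔭 h2)
    simpa using h3
  have units_of_K : ∀ (a : kˣ) (u : (𝔭.adicCompletionIntegers k)ˣ)
      (b : (𝔭.adicCompletion k)ˣ),
      algebraMap k (𝔭.adicCompletion k) (a : k)
        = ((u : 𝔭.adicCompletionIntegers k) : 𝔭.adicCompletion k)
          * (b : 𝔭.adicCompletion k) ^ p →
      localUnitsMap k 𝔭 a = injU 𝔭 u * b ^ p := by
    intro a u b hK
    apply Units.ext
    rw [Units.val_mul, Units.val_pow_eq_pow_val, coe_injU]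
    exact hK
  refine ⟨?_, ?_, ?_⟩
  · apply Subgroup.map_mono
    intro a ha
    rw [mem_VSpre_iff] at ha ⊢
    obtain ⟨h1, h2⟩ := ha
    refine ⟨fun v hv => h1 v (Set.mem_insert_of_mem _ hv), fun v hv => ?_⟩
    by_cases hv𝔭 : v = 𝔭
    · subst hv𝔭
      exact locallyPthPower_le_ker p v (h1 v (Set.mem_insert _ _))
    · refine h2 v ?_
      simp only [Set.mem_compl_iff, Set.mem_insert_iff, not_or] at hv ⊢
      exact ⟨hv𝔭, hv⟩
  · intro a ha
    have hd := (mem_ker_valModP_iff p 𝔭 a).mp (hVS_ker a ha)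
    obtain ⟨u, b, hub⟩ := exists_fact p 𝔭 hp0 a hd
    refine ⟨u, b, ?_⟩
    have h4 := congrArg Units.val hub
    simpa [Units.val_mul, coe_injU, coe_localUnitsMap] using h4
  · choose rep hrepmem hrepmk using (fun x : VS k p ↑S => Subgroup.mem_map.mp x.2)
    have hmk : ∀ x : VS k p ↑S,
        (QuotientGroup.mk (rep x) : kˣ ⧸ pPowers kˣ p) = ↑x := fun x => hrepmk x
    have hrepdvd : ∀ x, (p : ℤ) ∣ Multiplicative.toAdd (mulValHom k 𝔭 (rep x)) := fun x =>
      (mem_ker_valModP_iff p 𝔭 _).mp (hVSpre_ker _ (hrepmem x))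
    choose uu bb hub using fun x => exists_fact p 𝔭 hp0 (rep x) (hrepdvd x)
    refine ⟨MonoidHom.mk' (fun x => QuotientGroup.mk (uu x)) ?_, ?_, ?_⟩
    · intro x y
      have hq : (QuotientGroup.mk (rep (x * y)) : kˣ ⧸ pPowers kˣ p)
          = QuotientGroup.mk (rep x * rep y) := by
        rw [QuotientGroup.mk_mul, hmk, hmk, hmk]; rfl
      have hfac : localUnitsMap k 𝔭 (rep x * rep y)
          = injU 𝔭 (uu x * uu y) * (bb x * bb y) ^ p := by
        rw [map_mul, hub, hub, map_mul, mul_pow, mul_mul_mul_comm]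
      have h5 := main_uniq p 𝔭 hp0 hq (hub (x * y)) hfac
      exact h5.trans rfl
    · intro a h u b hK
      have hq : (QuotientGroup.mk (rep ⟨QuotientGroup.mk a, h⟩) : kˣ ⧸ pPowers kˣ p)
          = QuotientGroup.mk a := hmk _
      exact main_uniq p 𝔭 hp0 hq (hub _) (units_of_K a u b hK)
    · intro x
      constructor
      · intro h1
        have hmem1 : uu x ∈ pPowers (𝔭.adicCompletionIntegers k)ˣ p :=
          (QuotientGroup.eq_one_iff _).mp h1
        obtain ⟨w, hw⟩ := hmem1
        have hfac : localUnitsMap k 𝔭 (rep x) = (injU 𝔭 w * bb x) ^ p := by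
          rw [hub, ← hw, powMonoidHom_apply, map_pow, mul_pow]
        have hloc : rep x ∈ locallyPthPower k p 𝔭 :=
          ⟨injU 𝔭 w * bb x, by rw [powMonoidHom_apply, ← hfac]⟩
        have hmem : rep x ∈ VSpre k p (insert 𝔭 ↑S) := by
          rw [mem_VSpre_iff]
          obtain ⟨g1, g2⟩ := (mem_VSpre_iff p).mp (hrepmem x)
          refine ⟨fun v hv => ?_, fun v hv => ?_⟩
          · rcases Set.mem_insert_iff.mp hv with rfl | hv'
            · exact hloc
            · exact g1 v hv'
          · refine g2 v ?_
            simp only [Set.mem_compl_iff, Set.mem_insert_iff, not_or] at hv ⊢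
            exact hv.2
        exact Subgroup.mem_map.mpr ⟨rep x, hmem, hrepmk x⟩
      · intro h1
        obtain ⟨a'', ha'', hq''⟩ := Subgroup.mem_map.mp h1
        have hl : a'' ∈ locallyPthPower k p 𝔭 :=
          ((mem_VSpre_iff p).mp ha'').1 𝔭 (Set.mem_insert _ _)
        obtain ⟨d, hd⟩ := hl
        have hfac : localUnitsMap k 𝔭 a''
            = injU 𝔭 (1 : (𝔭.adicCompletionIntegers k)ˣ) * d ^ p := by
          rw [map_one, one_mul, ← hd, powMonoidHom_apply]
        have hq : (QuotientGroup.mk (rep x) : kˣ ⧸ pPowers kˣ p) = QuotientGroup.mk a'' := by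
          rw [hmk]; exact hq''.symm
        have h6 := main_uniq p 𝔭 hp0 hq (hub x) hfac
        show QuotientGroup.mk (uu x) = 1
        rw [h6]
        simp
end

section
/- Let k be a number field and p a prime number. The map sending the class of a ∈ k^× to the family (v(a) mod p)_v, indexed by the nonzero primes v of O_k, is a well-defined group homomorphism k^×/(k^×)^p → ⊕_v ℤ/pℤ (all but finitely many coordinates vanish); its kernel is V_∅(k) and its cokernel is isomorphic to Cl(k)/pCl(k). -/
open NumberField IsDedekindDomain

open scoped DirectSum

open scoped nonZeroDivisors

attribute [local instance] Classical.propDecidable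

set_option linter.unusedSectionVars false

lemma coe_mulValHom_s9 (k : Type*) [Field k] [NumberField k]
    (v : HeightOneSpectrum (𝓞 k)) (a : kˣ) :
    ((mulValHom k v a : Multiplicative ℤ) : WithZero (Multiplicative ℤ)) = v.valuation k (a : k) := by
  simp only [mulValHom, MonoidHom.comp_apply, MulEquiv.coe_toMonoidHom]
  rw [WithZero.unitsWithZeroEquiv]
  simp [WithZero.coe_unzero]

lemma mulValHom_eq (k : Type*) [Field k] [NumberField k]
    (v : HeightOneSpectrum (𝓞 k)) (a : kˣ) (m : Multiplicative ℤ)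
    (h : v.valuation k (a : k) = (m : WithZero (Multiplicative ℤ))) :
    mulValHom k v a = m := by
  have := coe_mulValHom_s9 k v a
  rw [h] at this
  exact_mod_cast this

lemma addVal_eq_count (k : Type) [Field k] [NumberField k]
    (v : HeightOneSpectrum (𝓞 k)) (a : kˣ) :
    addVal k v a =
      FractionalIdeal.count k v (FractionalIdeal.spanSingleton (𝓞 k)⁰ (a : k)) := by
  classical
  obtain ⟨⟨x, y⟩, hxy⟩ := IsLocalization.mk'_surjective (𝓞 k)⁰ (a : k)
  dsimp only at hxy
  have hy0 : (y : 𝓞 k) ≠ 0 := nonZeroDivisors.coe_ne_zero y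
  have hx0 : x ≠ 0 := by
    intro h
    rw [h, IsLocalization.mk'_zero] at hxy
    exact Units.ne_zero a hxy.symm
  set cx : ℕ := (Associates.mk v.asIdeal).count (Associates.mk (Ideal.span {x})).factors with hcx
  set cy : ℕ := (Associates.mk v.asIdeal).count
      (Associates.mk (Ideal.span {(y : 𝓞 k)})).factors with hcy
  have hval : mulValHom k v a =
      Multiplicative.ofAdd (-(cx : ℤ)) / Multiplicative.ofAdd (-(cy : ℤ)) := by
    apply mulValHom_eq
    rw [← hxy, v.valuation_of_mk', HeightOneSpectrum.intValuation_apply,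
      HeightOneSpectrum.intValuation_apply, v.intValuationDef_if_neg hx0,
      v.intValuationDef_if_neg hy0, WithZero.coe_div]
    rfl
  have haddval : addVal k v a = (cx : ℤ) - (cy : ℤ) := by
    rw [addVal, hval, toAdd_div, toAdd_ofAdd, toAdd_ofAdd]
    ring
  have hI : FractionalIdeal.spanSingleton (𝓞 k)⁰ (a : k) ≠ 0 := by
    rw [ne_eq, FractionalIdeal.spanSingleton_eq_zero_iff]
    exact Units.ne_zero a
  have haJ : FractionalIdeal.spanSingleton (𝓞 k)⁰ (a : k) =
      FractionalIdeal.spanSingleton (𝓞 k)⁰ ((algebraMap (𝓞 k) k) (y : 𝓞 k))⁻¹ *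
        ↑(Ideal.span {x} : Ideal (𝓞 k)) := by
    rw [FractionalIdeal.coeIdeal_span_singleton,
      FractionalIdeal.spanSingleton_mul_spanSingleton, ← hxy,
      IsFractionRing.mk'_eq_div, div_eq_mul_inv, mul_comm]
  rw [FractionalIdeal.count_well_defined k v hI haJ, haddval]

variable (k : Type) [Field k] [NumberField k]

/-- The divisor of a nonzero fractional ideal, as a finitely supported family. -/
noncomputable def dfun (I : (FractionalIdeal (𝓞 k)⁰ k)ˣ) :
    ⨁ _v : HeightOneSpectrum (𝓞 k), ℤ :=
  DFinsupp.mk (Filter.eventually_cofinite.mp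
      (FractionalIdeal.finite_factors (I : FractionalIdeal (𝓞 k)⁰ k))).toFinset
    fun v => FractionalIdeal.count k v.1 (I : FractionalIdeal (𝓞 k)⁰ k)

lemma dfun_apply (I : (FractionalIdeal (𝓞 k)⁰ k)ˣ) (v : HeightOneSpectrum (𝓞 k)) :
    dfun k I v = FractionalIdeal.count k v (I : FractionalIdeal (𝓞 k)⁰ k) := by
  rw [dfun, DFinsupp.mk_apply]
  split_ifs with h
  · rfl
  · rw [Set.Finite.mem_toFinset, Set.mem_setOf_eq, not_not] at h
    exact h.symm

/-- The divisor map, as a group homomorphism. -/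
noncomputable def dHom : (FractionalIdeal (𝓞 k)⁰ k)ˣ →*
    Multiplicative (⨁ _v : HeightOneSpectrum (𝓞 k), ℤ) :=
  MonoidHom.mk' (fun I => Multiplicative.ofAdd (dfun k I)) (by
    intro I J
    rw [← ofAdd_add]
    refine congrArg Multiplicative.ofAdd (DFinsupp.ext fun v => ?_)
    rw [DFinsupp.add_apply, dfun_apply, dfun_apply, dfun_apply, Units.val_mul,
      FractionalIdeal.count_mul k v (Units.ne_zero I) (Units.ne_zero J)])

lemma dHom_inj : Function.Injective (dHom k) := by
  intro I J h
  have h' : ∀ v, FractionalIdeal.count k v (I : FractionalIdeal (𝓞 k)⁰ k) =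
      FractionalIdeal.count k v (J : FractionalIdeal (𝓞 k)⁰ k) := by
    intro v
    rw [← dfun_apply, ← dfun_apply]
    have : dfun k I = dfun k J := by
      simpa [dHom, MonoidHom.mk'_apply] using h
    rw [this]
  apply Units.ext
  rw [← FractionalIdeal.finprod_heightOneSpectrum_factorization' (K := k) (Units.ne_zero I),
    ← FractionalIdeal.finprod_heightOneSpectrum_factorization' (K := k) (Units.ne_zero J)]
  exact finprod_congr fun v => by rw [h' v]

lemma dHom_surj : Function.Surjective (dHom k) := by
  intro x
  set e : ⨁ _v : HeightOneSpectrum (𝓞 k), ℤ := Multiplicative.toAdd x with he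
  have hev : ∀ᶠ v : HeightOneSpectrum (𝓞 k) in Filter.cofinite, e v = 0 := by
    rw [Filter.eventually_cofinite]
    apply Set.Finite.subset (DFinsupp.support e).finite_toSet
    intro v hv
    simpa [DFinsupp.mem_support_iff] using hv
  set I₀ : FractionalIdeal (𝓞 k)⁰ k :=
    ∏ᶠ v : HeightOneSpectrum (𝓞 k), (v.asIdeal : FractionalIdeal (𝓞 k)⁰ k) ^ (e v) with hI₀
  have hsupp : Function.mulSupport
      (fun v : HeightOneSpectrum (𝓞 k) => (v.asIdeal : FractionalIdeal (𝓞 k)⁰ k) ^ e v)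
        ⊆ ↑(DFinsupp.support e) := by
    intro v hv
    rw [Function.mem_mulSupport] at hv
    rw [Finset.mem_coe, DFinsupp.mem_support_iff]
    intro h0
    rw [h0, zpow_zero] at hv
    exact hv rfl
  have hI₀0 : I₀ ≠ 0 := by
    rw [hI₀, finprod_eq_prod_of_mulSupport_subset _ hsupp]
    apply Finset.prod_ne_zero_iff.mpr
    intro v _
    exact zpow_ne_zero _ (FractionalIdeal.coeIdeal_ne_zero.mpr v.ne_bot)
  refine ⟨Units.mk0 I₀ hI₀0, ?_⟩
  have : dfun k (Units.mk0 I₀ hI₀0) = e := by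
    refine DFinsupp.ext fun v => ?_
    rw [dfun_apply, Units.val_mk0, hI₀, FractionalIdeal.count_finprod k v _ hev]
  apply Multiplicative.toAdd.injective
  simpa [dHom, MonoidHom.mk'_apply] using this

noncomputable def psi (p : ℕ) :
    kˣ →* Multiplicative (⨁ _v : HeightOneSpectrum (𝓞 k), ZMod p) :=
  (AddMonoidHom.toMultiplicative (DFinsupp.mapRange.addMonoidHom
      (fun _v : HeightOneSpectrum (𝓞 k) => Int.castAddHom (ZMod p)))).comp
    ((dHom k).comp (toPrincipalIdeal (𝓞 k) k))

lemma psi_toAdd (p : ℕ) (a : kˣ) (v : HeightOneSpectrum (𝓞 k)) :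
    Multiplicative.toAdd (psi k p a) v =
      ((dfun k (toPrincipalIdeal (𝓞 k) k a) v : ℤ) : ZMod p) := by
  rfl

lemma psi_apply (p : ℕ) (a : kˣ) (v : HeightOneSpectrum (𝓞 k)) :
    Multiplicative.toAdd (psi k p a) v = ((addVal k v a : ℤ) : ZMod p) := by
  rw [psi_toAdd, dfun_apply, coe_toPrincipalIdeal, ← addVal_eq_count]

lemma psi_eq_one_iff (p : ℕ) (a : kˣ) :
    psi k p a = 1 ↔ ∀ v : HeightOneSpectrum (𝓞 k), ((addVal k v a : ℤ) : ZMod p) = 0 := by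
  constructor
  · intro h v
    rw [← psi_apply, h]
    rfl
  · intro h
    apply Multiplicative.toAdd.injective
    refine DFinsupp.ext fun v => ?_
    rw [psi_apply k p a v, h v]
    rfl

lemma pPowers_le_ker_psi (p : ℕ) : pPowers kˣ p ≤ (psi k p).ker := by
  rintro _ ⟨a, rfl⟩
  rw [MonoidHom.mem_ker]
  show psi k p (a ^ p) = 1
  rw [map_pow]
  apply Multiplicative.toAdd.injective
  refine DFinsupp.ext fun v => ?_
  rw [toAdd_pow, DFinsupp.smul_apply]
  show p • (Multiplicative.toAdd (psi k p a) v) = Multiplicative.toAdd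
    (1 : Multiplicative (⨁ _v : HeightOneSpectrum (𝓞 k), ZMod p)) v
  rw [nsmul_eq_mul, ZMod.natCast_self, zero_mul]
  simp

lemma map_pPowers {G H : Type*} [CommGroup G] [CommGroup H] (e : G ≃* H) (p : ℕ) :
    (pPowers G p).map (e : G →* H) = pPowers H p := by
  ext x
  constructor
  · rintro ⟨g, ⟨h, rfl⟩, rfl⟩
    exact ⟨e h, by simp [powMonoidHom_apply, map_pow]⟩
  · rintro ⟨h, rfl⟩
    exact ⟨(e.symm h) ^ p, ⟨e.symm h, rfl⟩, by simp [powMonoidHom_apply, map_pow]⟩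

omit [NumberField k] in
lemma ptor (p : ℕ) (z : ⨁ _v : HeightOneSpectrum (𝓞 k), ZMod p) : p • z = 0 := by
  refine DFinsupp.ext fun v => ?_
  rw [DFinsupp.smul_apply, nsmul_eq_mul, ZMod.natCast_self, zero_mul]
  rfl

lemma mem_ker_valModP (p : ℕ) (v : HeightOneSpectrum (𝓞 k)) (a : kˣ) :
    a ∈ (valModP k p v).ker ↔ ((addVal k v a : ℤ) : ZMod p) = 0 := by
  have h : valModP k p v a =
      Multiplicative.ofAdd ((Multiplicative.toAdd (mulValHom k v a) : ℤ) : ZMod p) := rfl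
  rw [MonoidHom.mem_ker, h, ofAdd_eq_one, addVal, Int.cast_neg, neg_eq_zero]

lemma mem_VSpre_empty (p : ℕ) (a : kˣ) :
    a ∈ VSpre k p ∅ ↔ ∀ v : HeightOneSpectrum (𝓞 k), ((addVal k v a : ℤ) : ZMod p) = 0 := by
  rw [VSpre, Subgroup.mem_inf]
  simp only [Subgroup.mem_iInf, Set.mem_empty_iff_false, false_implies, implies_true, true_and,
    Set.mem_compl_iff, Set.notMem_empty, not_false_iff, forall_true_left]
  constructor
  · intro h v
    exact (mem_ker_valModP k p v a).mp (h v)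
  · intro h v
    exact (mem_ker_valModP k p v a).mpr (h v)

/-- The ideal class group as a quotient of fractional ideals of `k`. -/
abbrev ClP := (FractionalIdeal (𝓞 k)⁰ k)ˣ ⧸ (toPrincipalIdeal (𝓞 k) k).range

instance pPowers_normal (p : ℕ) : (pPowers (ClP k) p).Normal :=
  ⟨fun n hn g => by rwa [mul_comm g n, mul_inv_cancel_right]⟩

/-- `Cl(k)/p Cl(k)`. -/
abbrev ClMod (p : ℕ) := ClP k ⧸ pPowers (ClP k) p

lemma ClMod_tor (p : ℕ) (q : ClMod k p) : q ^ p = 1 := by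
  obtain ⟨g, rfl⟩ := QuotientGroup.mk'_surjective (pPowers (ClP k) p) q
  rw [← map_pow]
  exact (QuotientGroup.eq_one_iff _).mpr ⟨g, rfl⟩

lemma ClMod_tor' (p : ℕ) (q : Additive (ClMod k p)) : p • q = 0 := by
  apply Additive.toMul.injective
  rw [toMul_nsmul]
  exact ClMod_tor k p _

/-- The isomorphism between the group of invertible fractional ideals and the divisor group. -/
noncomputable def iotaE : (FractionalIdeal (𝓞 k)⁰ k)ˣ ≃*
    Multiplicative (⨁ _v : HeightOneSpectrum (𝓞 k), ℤ) :=
  MulEquiv.ofBijective (dHom k) ⟨dHom_inj k, dHom_surj k⟩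

noncomputable def cHom (p : ℕ) :
    Multiplicative (⨁ _v : HeightOneSpectrum (𝓞 k), ℤ) →* ClMod k p :=
  ((QuotientGroup.mk' (pPowers (ClP k) p)).comp
    (QuotientGroup.mk' (toPrincipalIdeal (𝓞 k) k).range)).comp (iotaE k).symm.toMonoidHom

noncomputable def cAdd (p : ℕ) :
    (⨁ _v : HeightOneSpectrum (𝓞 k), ℤ) →+ Additive (ClMod k p) :=
  MonoidHom.toAdditiveRight (cHom k p)

noncomputable def rhoHom (p : ℕ) : (⨁ _v : HeightOneSpectrum (𝓞 k), ℤ) →+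
    (⨁ _v : HeightOneSpectrum (𝓞 k), ZMod p) :=
  DFinsupp.mapRange.addMonoidHom (fun _v : HeightOneSpectrum (𝓞 k) => Int.castAddHom (ZMod p))

lemma rhoHom_apply (p : ℕ) (x : ⨁ _v : HeightOneSpectrum (𝓞 k), ℤ)
    (v : HeightOneSpectrum (𝓞 k)) : (rhoHom k p x) v = ((x v : ℤ) : ZMod p) := by
  show DFinsupp.mapRange (fun _i (n : ℤ) => Int.castAddHom (ZMod p) n)
      (fun _i => (Int.castAddHom (ZMod p)).map_zero) x v = _
  rw [DFinsupp.mapRange_apply]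
  rfl

lemma cAdd_p_zero (p : ℕ) (v : HeightOneSpectrum (𝓞 k)) :
    ((cAdd k p).comp (DirectSum.of (fun _v : HeightOneSpectrum (𝓞 k) => ℤ) v)) (p : ℤ) = 0 := by
  have h : ((p : ℤ)) = p • (1 : ℤ) := by simp
  rw [h, map_nsmul]
  exact ClMod_tor' k p _

/-- The map `⊕ ℤ/p → Cl(k)/p`. -/
noncomputable def thetaHom (p : ℕ) :
    (⨁ _v : HeightOneSpectrum (𝓞 k), ZMod p) →+ Additive (ClMod k p) :=
  DirectSum.toAddMonoid fun v => ZMod.lift p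
    ⟨(cAdd k p).comp (DirectSum.of (fun _v : HeightOneSpectrum (𝓞 k) => ℤ) v), cAdd_p_zero k p v⟩

lemma theta_comp_rho (p : ℕ) : (thetaHom k p).comp (rhoHom k p) = cAdd k p := by
  refine DirectSum.addHom_ext fun v n => ?_
  have h1 : (rhoHom k p) (DirectSum.of (fun _v : HeightOneSpectrum (𝓞 k) => ℤ) v n) =
      DirectSum.of (fun _v : HeightOneSpectrum (𝓞 k) => ZMod p) v ((n : ZMod p)) := by
    refine DFinsupp.ext fun w => ?_
    rw [rhoHom_apply]
    by_cases hw : w = v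
    · subst hw
      rw [DirectSum.of_eq_same, DirectSum.of_eq_same]
    · rw [DirectSum.of_eq_of_ne _ _ _ hw, DirectSum.of_eq_of_ne _ _ _ hw]
      exact Int.cast_zero
  rw [AddMonoidHom.comp_apply, h1, thetaHom, DirectSum.toAddMonoid_of, ZMod.lift_coe]
  rfl


set_option maxHeartbeats 1000000 in
/-- the map `k^×/(k^×)^p → ⊕_v ℤ/pℤ`, sending the class of `a` to
`(v(a) mod p)_v`, is a well-defined group homomorphism with kernel `V_∅(k)` and cokernel
isomorphic to `Cl(k)/pCl(k)`. -/
theorem statement9 (k : Type) [Field k] [NumberField k] (p : ℕ) (hp : p.Prime) :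
    ∃ φ : (kˣ ⧸ pPowers kˣ p) →*
        Multiplicative (⨁ _v : HeightOneSpectrum (𝓞 k), ZMod p),
      (∀ (a : kˣ) (v : HeightOneSpectrum (𝓞 k)),
        Multiplicative.toAdd (φ (QuotientGroup.mk a)) v = ((addVal k v a : ℤ) : ZMod p)) ∧
      φ.ker = VS k p ∅ ∧
      Nonempty ((Multiplicative (⨁ _v : HeightOneSpectrum (𝓞 k), ZMod p) ⧸ φ.range)
        ≃* (ClassGroup (𝓞 k) ⧸ pPowers (ClassGroup (𝓞 k)) p)) := by
  classical
  haveI : NeZero p := ⟨hp.ne_zero⟩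
  refine ⟨QuotientGroup.lift (pPowers kˣ p) (psi k p) (pPowers_le_ker_psi k p), ?_, ?_, ?_⟩
  · intro a v
    exact psi_apply k p a v
  · -- kernel
    ext x
    obtain ⟨a, rfl⟩ := QuotientGroup.mk'_surjective (pPowers kˣ p) x
    rw [MonoidHom.mem_ker]
    have hlift : QuotientGroup.lift (pPowers kˣ p) (psi k p) (pPowers_le_ker_psi k p)
        (QuotientGroup.mk' (pPowers kˣ p) a) = psi k p a := rfl
    rw [hlift, VS]
    constructor
    · intro h
      exact ⟨a, (mem_VSpre_empty k p a).mpr ((psi_eq_one_iff k p a).mp h), rfl⟩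
    · rintro ⟨b, hb, hba⟩
      have h1 : psi k p b = 1 := (psi_eq_one_iff k p b).mpr ((mem_VSpre_empty k p b).mp hb)
      have h2 : b⁻¹ * a ∈ pPowers kˣ p := by
        rw [← QuotientGroup.eq]
        exact hba
      have h3 : psi k p (b⁻¹ * a) = 1 := pPowers_le_ker_psi k p h2
      have h4 : a = b * (b⁻¹ * a) := by group
      rw [h4, map_mul, h1, h3, one_mul]
  · -- cokernel
    set θ : Multiplicative (⨁ _v : HeightOneSpectrum (𝓞 k), ZMod p) →* ClMod k p :=
      AddMonoidHom.toMultiplicativeLeft (thetaHom k p) with hθ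
    have hθρ : ∀ y : ⨁ _v : HeightOneSpectrum (𝓞 k), ℤ,
        thetaHom k p (rhoHom k p y) = cAdd k p y := fun y => by
      simpa using DFunLike.congr_fun (theta_comp_rho k p) y
    have hclsurj : Function.Surjective (cHom k p) := by
      intro q
      obtain ⟨c1, rfl⟩ := QuotientGroup.mk'_surjective _ q
      obtain ⟨I, rfl⟩ := QuotientGroup.mk'_surjective _ c1
      refine ⟨iotaE k I, ?_⟩
      show (QuotientGroup.mk' (pPowers (ClP k) p))
        ((QuotientGroup.mk' (toPrincipalIdeal (𝓞 k) k).range)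
          ((iotaE k).symm (iotaE k I))) = _
      rw [MulEquiv.symm_apply_apply]
    have hθsurj : Function.Surjective θ := by
      intro q
      obtain ⟨x, hx⟩ := hclsurj q
      refine ⟨Multiplicative.ofAdd (rhoHom k p (Multiplicative.toAdd x)), ?_⟩
      show Additive.toMul (thetaHom k p (rhoHom k p (Multiplicative.toAdd x))) = q
      rw [hθρ]
      show cHom k p (Multiplicative.ofAdd (Multiplicative.toAdd x)) = q
      rw [ofAdd_toAdd, hx]
    have hrange : (QuotientGroup.lift (pPowers kˣ p) (psi k p)
        (pPowers_le_ker_psi k p)).range = θ.ker := by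
      ext x
      constructor
      · rintro ⟨y, rfl⟩
        obtain ⟨a, rfl⟩ := QuotientGroup.mk'_surjective (pPowers kˣ p) y
        rw [MonoidHom.mem_ker]
        have e1 : QuotientGroup.lift (pPowers kˣ p) (psi k p) (pPowers_le_ker_psi k p)
            (QuotientGroup.mk' (pPowers kˣ p) a) = psi k p a := rfl
        rw [e1]
        have e2 : θ (psi k p a) =
            cHom k p (dHom k (toPrincipalIdeal (𝓞 k) k a)) := by
          show Additive.toMul (thetaHom k p (rhoHom k p
            (Multiplicative.toAdd (dHom k (toPrincipalIdeal (𝓞 k) k a))))) = _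
          rw [hθρ]
          rfl
        rw [e2]
        show (QuotientGroup.mk' (pPowers (ClP k) p))
          ((QuotientGroup.mk' (toPrincipalIdeal (𝓞 k) k).range)
            ((iotaE k).symm (iotaE k (toPrincipalIdeal (𝓞 k) k a)))) = 1
        rw [MulEquiv.symm_apply_apply]
        have hone : (QuotientGroup.mk' (toPrincipalIdeal (𝓞 k) k).range)
            ((toPrincipalIdeal (𝓞 k) k) a) = 1 :=
          (QuotientGroup.eq_one_iff _).mpr (MonoidHom.mem_range.mpr ⟨a, rfl⟩)
        rw [hone, map_one]
      · intro hx
        have hx1 : θ x = 1 := hx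
        set e := Multiplicative.toAdd x with he
        set et : ⨁ _v : HeightOneSpectrum (𝓞 k), ℤ :=
          DFinsupp.mapRange (fun _v (c : ZMod p) => (c.val : ℤ)) (fun _v => by simp) e with het
        have hρet : rhoHom k p et = e := by
          refine DFinsupp.ext fun v => ?_
          rw [rhoHom_apply, het, DFinsupp.mapRange_apply]
          simp [ZMod.natCast_val, ZMod.cast_id]
        have hc0 : cHom k p (Multiplicative.ofAdd et) = 1 := by
          have h1 : thetaHom k p (rhoHom k p et) = cAdd k p et := hθρ et
          rw [hρet] at h1
          have h2 : Additive.toMul (thetaHom k p e) = (1 : ClMod k p) := hx1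
          rw [h1] at h2
          exact h2
        set I := (iotaE k).symm (Multiplicative.ofAdd et) with hI
        have hmem : QuotientGroup.mk' (toPrincipalIdeal (𝓞 k) k).range I ∈
            pPowers (ClP k) p := (QuotientGroup.eq_one_iff _).mp hc0
        obtain ⟨cb, hcb⟩ := hmem
        obtain ⟨J, rfl⟩ := QuotientGroup.mk'_surjective _ cb
        have hcb' : (QuotientGroup.mk' (toPrincipalIdeal (𝓞 k) k).range J) ^ p =
            QuotientGroup.mk' (toPrincipalIdeal (𝓞 k) k).range I := hcb
        have hprin : I * (J ^ p)⁻¹ ∈ (toPrincipalIdeal (𝓞 k) k).range := by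
          have hone : QuotientGroup.mk' (toPrincipalIdeal (𝓞 k) k).range
              (I * (J ^ p)⁻¹) = 1 := by
            rw [map_mul, map_inv, map_pow, ← hcb']
            group
          exact (QuotientGroup.eq_one_iff _).mp hone
        obtain ⟨a, ha⟩ := hprin
        refine ⟨QuotientGroup.mk a, ?_⟩
        show psi k p a = x
        have hIdec : I = toPrincipalIdeal (𝓞 k) k a * J ^ p := by
          rw [ha]; group
        have hdI : dHom k I = Multiplicative.ofAdd et := by
          show (iotaE k) I = _
          rw [hI, MulEquiv.apply_symm_apply]
        have h3 : Multiplicative.ofAdd et =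
            dHom k (toPrincipalIdeal (𝓞 k) k a) * (dHom k J) ^ p := by
          rw [← hdI, hIdec, map_mul, map_pow]
        have h4 : et = Multiplicative.toAdd (dHom k (toPrincipalIdeal (𝓞 k) k a)) +
            p • Multiplicative.toAdd (dHom k J) := by
          have h5 := congrArg Multiplicative.toAdd h3
          rw [toAdd_mul, toAdd_pow] at h5
          simpa using h5
        have h6 : e = rhoHom k p
            (Multiplicative.toAdd (dHom k (toPrincipalIdeal (𝓞 k) k a))) := by
          rw [← hρet, h4, map_add, map_nsmul, ptor k p, add_zero]
        show Multiplicative.ofAdd (rhoHom k p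
          (Multiplicative.toAdd (dHom k (toPrincipalIdeal (𝓞 k) k a)))) = x
        rw [← h6, he, ofAdd_toAdd]
    have hmap : Subgroup.map (((ClassGroup.equiv (R := 𝓞 k) k).symm :
          ClP k ≃* ClassGroup (𝓞 k)) : ClP k →* ClassGroup (𝓞 k)) (pPowers (ClP k) p) =
        pPowers (ClassGroup (𝓞 k)) p :=
      by
      ext x
      simp only [Subgroup.mem_map]
      constructor
      · rintro ⟨g, ⟨h, rfl⟩, rfl⟩
        exact ⟨(ClassGroup.equiv (R := 𝓞 k) k).symm h, by simp [powMonoidHom_apply, map_pow]⟩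
      · rintro ⟨h, rfl⟩
        refine ⟨((ClassGroup.equiv (R := 𝓞 k) k) h) ^ p, ⟨(ClassGroup.equiv (R := 𝓞 k) k) h, rfl⟩, ?_⟩
        simp [powMonoidHom_apply, map_pow]
    exact ⟨((QuotientGroup.quotientMulEquivOfEq hrange).trans
      (QuotientGroup.quotientKerEquivOfSurjective θ hθsurj)).trans
      (QuotientGroup.congr (pPowers (ClP k) p) (pPowers (ClassGroup (𝓞 k)) p)
        ((ClassGroup.equiv (R := 𝓞 k) k).symm : ClP k ≃* ClassGroup (𝓞 k)) hmap)⟩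
end

section
/- Let k be a number field and p a prime number not dividing the class number of k. Then the sequence 0 → O_k^×/(O_k^×)^p → k^×/(k^×)^p → ⊕_v ℤ/pℤ → 0 is exact, where the first map is induced by the inclusion O_k^× ⊆ k^×, the second map sends the class of a to the family (v(a) mod p)_v indexed by the nonzero primes v of O_k, the first map is injective, the image of the first map equals the kernel of the second, and the second map is surjective. -/
open NumberField IsDedekindDomain

open scoped DirectSum

section Helpers
open FractionalIdeal
open scoped nonZeroDivisors
variable (k : Type) [Field k] [NumberField k]

lemma mulValHom_coe (v : HeightOneSpectrum (𝓞 k)) (a : kˣ) :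
    (↑(mulValHom k v a) : WithZero (Multiplicative ℤ)) = v.valuation k (a : k) := by
  simp [mulValHom, WithZero.unitsWithZeroEquiv, WithZero.coe_unzero]

lemma mulValHom_eq_valuationOfNeZero (v : HeightOneSpectrum (𝓞 k)) :
    mulValHom k v = v.valuationOfNeZero := by
  refine MonoidHom.ext fun a => ?_
  rw [← WithZero.coe_inj, mulValHom_coe, HeightOneSpectrum.valuationOfNeZero_eq]

lemma spanSingleton_unit_ne_zero (a : kˣ) :
    spanSingleton (𝓞 k)⁰ (a : k) ≠ 0 :=
  spanSingleton_ne_zero_iff.mpr a.ne_zero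

lemma addVal_eq_count_s10 (v : HeightOneSpectrum (𝓞 k)) (a : kˣ) :
    addVal k v a = count k v (spanSingleton (𝓞 k)⁰ (a : k)) := by
  classical
  obtain ⟨⟨x, y⟩, hxy⟩ := IsLocalization.mk'_surjective (𝓞 k)⁰ (a : k)
  dsimp only at hxy
  have hy0 : (y : 𝓞 k) ≠ 0 := nonZeroDivisors.coe_ne_zero y
  have hdiv : (a : k) = algebraMap (𝓞 k) k x / algebraMap (𝓞 k) k y := by
    rw [← hxy, IsFractionRing.mk'_eq_div]
  have hx0 : x ≠ 0 := by
    rintro rfl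
    rw [RingHom.map_zero, zero_div] at hdiv
    exact a.ne_zero hdiv
  have hspan : spanSingleton (𝓞 k)⁰ (a : k) =
      spanSingleton (𝓞 k)⁰ (algebraMap (𝓞 k) k (y : 𝓞 k))⁻¹ *
        ↑(Ideal.span {x} : Ideal (𝓞 k)) := by
    rw [coeIdeal_span_singleton, spanSingleton_mul_spanSingleton, hdiv,
      div_eq_mul_inv, mul_comm]
  have hcount := count_well_defined k v (spanSingleton_unit_ne_zero k a) hspan
  have hval : v.valuation k (a : k)
      = (↑(Multiplicative.ofAdd
            (-((Associates.mk v.asIdeal).count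
                (Associates.mk (Ideal.span {x} : Ideal (𝓞 k))).factors : ℤ)) /
          Multiplicative.ofAdd
            (-((Associates.mk v.asIdeal).count
                (Associates.mk (Ideal.span {(y : 𝓞 k)} : Ideal (𝓞 k))).factors : ℤ))) :
          WithZero (Multiplicative ℤ)) := by
    rw [hdiv, map_div₀, HeightOneSpectrum.valuation_of_algebraMap,
      HeightOneSpectrum.valuation_of_algebraMap, HeightOneSpectrum.intValuation_apply,
      HeightOneSpectrum.intValuation_apply, v.intValuationDef_if_neg hx0,
      v.intValuationDef_if_neg hy0, WithZero.coe_div]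
    rfl
  have hmul : mulValHom k v a = _ := (WithZero.coe_inj.mp ((mulValHom_coe k v a).trans hval))
  rw [addVal, hmul, hcount]
  simp only [toAdd_div, toAdd_ofAdd]
  ring

lemma addVal_mul (v : HeightOneSpectrum (𝓞 k)) (a b : kˣ) :
    addVal k v (a * b) = addVal k v a + addVal k v b := by
  simp only [addVal, _root_.map_mul, toAdd_mul]; ring

lemma addVal_one (v : HeightOneSpectrum (𝓞 k)) : addVal k v 1 = 0 := by
  simp [addVal]

lemma addVal_pow (v : HeightOneSpectrum (𝓞 k)) (a : kˣ) (n : ℕ) :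
    addVal k v (a ^ n) = n * addVal k v a := by
  simp only [addVal, _root_.map_pow, toAdd_pow]; ring

lemma addVal_unit (v : HeightOneSpectrum (𝓞 k)) (u : (𝓞 k)ˣ) :
    addVal k v (Units.map (algebraMap (𝓞 k) k).toMonoidHom u) = 0 := by
  rw [addVal, mulValHom_eq_valuationOfNeZero]
  rw [show (algebraMap (𝓞 k) k).toMonoidHom = (algebraMap (𝓞 k) k : (𝓞 k) →* k) from rfl,
    HeightOneSpectrum.valuation_of_unit_eq, toAdd_one, neg_zero]

lemma addVal_support_finite (a : kˣ) :
    {v : HeightOneSpectrum (𝓞 k) | addVal k v a ≠ 0}.Finite := by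
  have h := FractionalIdeal.finite_factors (spanSingleton (𝓞 k)⁰ (a : k))
  rw [Filter.eventually_cofinite] at h
  refine h.subset fun v hv => ?_
  simp only [Set.mem_setOf_eq, addVal_eq_count_s10 k v a] at hv ⊢
  exact hv

open scoped DirectSum

variable (p : ℕ)

open Classical in
noncomputable def Dfun (a : kˣ) : ⨁ _v : HeightOneSpectrum (𝓞 k), ZMod p :=
  DFinsupp.mk (addVal_support_finite k a).toFinset
    (fun v => ((addVal k v.1 a : ℤ) : ZMod p))

lemma Dfun_apply (a : kˣ) (v : HeightOneSpectrum (𝓞 k)) :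
    Dfun k p a v = ((addVal k v a : ℤ) : ZMod p) := by
  classical
  rw [Dfun, DFinsupp.mk_apply]
  split_ifs with h
  · rfl
  · rw [Set.Finite.mem_toFinset, Set.mem_setOf_eq, not_not] at h
    rw [h]; simp

lemma Dfun_mul (a b : kˣ) : Dfun k p (a * b) = Dfun k p a + Dfun k p b := by
  refine DFinsupp.ext fun v => ?_
  simp only [Dfun_apply, DirectSum.add_apply, addVal_mul, Int.cast_add]

noncomputable def Fhom : kˣ →* Multiplicative (⨁ _v : HeightOneSpectrum (𝓞 k), ZMod p) where
  toFun a := Multiplicative.ofAdd (Dfun k p a)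
  map_one' := by
    have h : Dfun k p 1 = 0 := DFinsupp.ext fun v => by
      rw [Dfun_apply, addVal_one]; simp
    simp only [h, ofAdd_zero]
  map_mul' a b := by
    rw [Dfun_mul, ofAdd_add]

lemma finsupp_prod_ne_zero (exps : HeightOneSpectrum (𝓞 k) →₀ ℤ) :
    exps.prod (fun w n => (w.asIdeal : FractionalIdeal (𝓞 k)⁰ k) ^ n) ≠ 0 := by
  rw [Finsupp.prod]
  refine Finset.prod_ne_zero_iff.mpr fun w _ => ?_
  exact zpow_ne_zero _ (coeIdeal_ne_zero.mpr w.ne_bot)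

lemma exists_gen (exps : HeightOneSpectrum (𝓞 k) →₀ ℤ) :
    ∃ a : kˣ, ∀ v, addVal k v a = (Nat.card (ClassGroup (𝓞 k)) : ℤ) * exps v := by
  set h := Nat.card (ClassGroup (𝓞 k)) with hh
  set J := exps.prod (fun w n => (w.asIdeal : FractionalIdeal (𝓞 k)⁰ k) ^ n) with hJ
  have hJ0 : J ≠ 0 := finsupp_prod_ne_zero k exps
  have hone : ClassGroup.mk k (Units.mk0 J hJ0 ^ h) = 1 := by
    rw [map_pow, pow_card_eq_one']
  have hprin := ClassGroup.mk_eq_one_iff.mp hone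
  obtain ⟨x, hx⟩ := (isPrincipal_iff _).mp hprin
  have hx' : J ^ h = spanSingleton (𝓞 k)⁰ x := by
    rw [← hx]; rfl
  have hx0 : x ≠ 0 := by
    rintro rfl
    rw [spanSingleton_zero] at hx'
    exact pow_ne_zero h hJ0 hx'
  refine ⟨Units.mk0 x hx0, fun v => ?_⟩
  rw [addVal_eq_count_s10]
  show count k v (spanSingleton (𝓞 k)⁰ x) = _
  rw [← hx', count_pow, count_finsuppProd]

lemma eq_of_count_eq {I I' : FractionalIdeal (𝓞 k)⁰ k} (hI : I ≠ 0) (hI' : I' ≠ 0)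
    (h : ∀ v, count k v I = count k v I') : I = I' := by
  rw [← finprod_heightOneSpectrum_factorization' (K := k) hI,
    ← finprod_heightOneSpectrum_factorization' (K := k) hI']
  exact finprod_congr fun v => by rw [h v]

lemma exists_pth_root_ideal (p : ℕ) (hp : p.Prime)
    (hcl : ¬ p ∣ Nat.card (ClassGroup (𝓞 k)))
    (a : kˣ) (ha : ∀ v, (p : ℤ) ∣ addVal k v a) :
    ∃ (u : (𝓞 k)ˣ) (b : kˣ),
      a = (Units.map (algebraMap (𝓞 k) k).toMonoidHom u) * b ^ p := by
  classical
  set Ia := spanSingleton (𝓞 k)⁰ (a : k) with hIa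
  have hIa0 : Ia ≠ 0 := spanSingleton_unit_ne_zero k a
  have hfin := FractionalIdeal.finite_factors Ia
  rw [Filter.eventually_cofinite] at hfin
  have hc : ∀ v, (p : ℤ) ∣ count k v Ia := fun v => by
    rw [← addVal_eq_count_s10]; exact ha v
  -- the finsupp of exponents divided by p
  have hmem : ∀ v, v ∈ hfin.toFinset ↔ count k v Ia / (p : ℤ) ≠ 0 := by
    intro v
    rw [Set.Finite.mem_toFinset, Set.mem_setOf_eq]
    constructor
    · intro hv hdiv
      apply hv
      have := Int.ediv_mul_cancel (hc v)
      rw [hdiv, zero_mul] at this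
      exact this.symm
    · intro hv hv'
      apply hv
      rw [hv', Int.zero_ediv]
  set exps : HeightOneSpectrum (𝓞 k) →₀ ℤ :=
    ⟨hfin.toFinset, fun v => count k v Ia / (p : ℤ), hmem⟩ with hexps
  set J := exps.prod (fun w n => (w.asIdeal : FractionalIdeal (𝓞 k)⁰ k) ^ n) with hJdef
  have hJ0 : J ≠ 0 := finsupp_prod_ne_zero k exps
  have hJc : ∀ v, count k v J = count k v Ia / (p : ℤ) := fun v => count_finsuppProd k v exps
  have hJp : J ^ p = Ia := by
    refine eq_of_count_eq k (pow_ne_zero p hJ0) hIa0 fun v => ?_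
    rw [count_pow, hJc, Int.mul_ediv_cancel' (hc v)]
  -- class group argument
  have h1 : ClassGroup.mk k (Units.mk0 J hJ0) ^ p = 1 := by
    rw [← map_pow]
    refine ClassGroup.mk_eq_one_iff.mpr ?_
    refine (isPrincipal_iff _).mpr ⟨(a : k), ?_⟩
    show ((Units.mk0 J hJ0 : (FractionalIdeal (𝓞 k)⁰ k)ˣ) : FractionalIdeal (𝓞 k)⁰ k) ^ p = _
    rw [Units.val_mk0, hJp, hIa]
  have h2 : ClassGroup.mk k (Units.mk0 J hJ0) ^ Nat.card (ClassGroup (𝓞 k)) = 1 :=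
    pow_card_eq_one'
  have horder : ClassGroup.mk k (Units.mk0 J hJ0) = 1 := by
    have hd1 := orderOf_dvd_of_pow_eq_one h1
    have hd2 := orderOf_dvd_of_pow_eq_one h2
    have hco : Nat.Coprime p (Nat.card (ClassGroup (𝓞 k))) :=
      (Nat.Prime.coprime_iff_not_dvd hp).mpr hcl
    have := Nat.dvd_gcd hd1 hd2
    rw [Nat.Coprime] at hco
    rw [hco, Nat.dvd_one] at this
    exact orderOf_eq_one_iff.mp this
  obtain ⟨b, hb⟩ := (isPrincipal_iff _).mp (ClassGroup.mk_eq_one_iff.mp horder)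
  have hb' : J = spanSingleton (𝓞 k)⁰ b := hb
  have hb0 : b ≠ 0 := by
    rintro rfl
    rw [spanSingleton_zero] at hb'
    exact hJ0 hb'
  have hspan : spanSingleton (𝓞 k)⁰ (b ^ p) = spanSingleton (𝓞 k)⁰ (a : k) := by
    rw [← spanSingleton_pow, ← hb', hJp, hIa]
  obtain ⟨z, hz⟩ := (spanSingleton_eq_spanSingleton (R := 𝓞 k)).mp hspan
  refine ⟨z, Units.mk0 b hb0, Units.ext ?_⟩
  rw [Units.val_mul, Units.coe_map]
  show (a : k) = algebraMap (𝓞 k) k z * (Units.mk0 b hb0 : k) ^ p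
  rw [← hz, Units.smul_def, Algebra.smul_def]
  rfl

end Helpers

/-- if `p` does not divide the class number of `k`, then the sequence
`0 → O_k^×/(O_k^×)^p → k^×/(k^×)^p → ⊕_v ℤ/pℤ → 0` is exact. -/
theorem statement10 (k : Type) [Field k] [NumberField k] (p : ℕ) (hp : p.Prime)
    (hcl : ¬ p ∣ Nat.card (ClassGroup (𝓞 k))) :
    ∃ (ψ : ((𝓞 k)ˣ ⧸ pPowers (𝓞 k)ˣ p) →* (kˣ ⧸ pPowers kˣ p))
      (φ : (kˣ ⧸ pPowers kˣ p) →*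
        Multiplicative (⨁ _v : HeightOneSpectrum (𝓞 k), ZMod p)),
      (∀ u : (𝓞 k)ˣ, ψ (QuotientGroup.mk u)
          = QuotientGroup.mk (Units.map (algebraMap (𝓞 k) k).toMonoidHom u)) ∧
      (∀ (a : kˣ) (v : HeightOneSpectrum (𝓞 k)),
        Multiplicative.toAdd (φ (QuotientGroup.mk a)) v = ((addVal k v a : ℤ) : ZMod p)) ∧
      Function.Injective ψ ∧
      ψ.range = φ.ker ∧
      Function.Surjective φ := by
  classical
  haveI : Fact p.Prime := ⟨hp⟩
  haveI : NeZero p := ⟨hp.ne_zero⟩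
  haveI : Fact (0 < p) := ⟨hp.pos⟩
  set f : (𝓞 k)ˣ →* kˣ := Units.map (algebraMap (𝓞 k) k).toMonoidHom with hf
  have hfpow : pPowers (𝓞 k)ˣ p ≤ Subgroup.comap f (pPowers kˣ p) := by
    rintro _ ⟨y, rfl⟩
    exact ⟨f y, by simp [powMonoidHom, map_pow]⟩
  have hFker : ∀ x ∈ pPowers kˣ p, Fhom k p x = 1 := by
    rintro _ ⟨y, rfl⟩
    show Multiplicative.ofAdd (Dfun k p (y ^ p)) = 1
    have hD : Dfun k p (y ^ p) = 0 := DFinsupp.ext fun v => by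
      rw [Dfun_apply, addVal_pow]
      push_cast
      simp [ZMod.natCast_self]
    rw [hD, ofAdd_zero]
  refine ⟨QuotientGroup.map _ _ f hfpow, QuotientGroup.lift _ (Fhom k p) (fun x hx => (MonoidHom.mem_ker).mpr (hFker x hx)),
    fun u => ?_, fun a v => ?_, ?_, ?_, ?_⟩
  · rw [QuotientGroup.map_mk]
  · show Multiplicative.toAdd (Fhom k p a) v = _
    show Multiplicative.toAdd (Multiplicative.ofAdd (Dfun k p a)) v = _
    rw [toAdd_ofAdd, Dfun_apply]
  · rw [injective_iff_map_eq_one]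
    intro q hq
    obtain ⟨u, rfl⟩ := QuotientGroup.mk_surjective q
    rw [QuotientGroup.map_mk, QuotientGroup.eq_one_iff] at hq
    have hker : u ∈ (selmerGroup.fromUnit (R := 𝓞 k) (K := k) (n := p)).ker := by
      rw [MonoidHom.mem_ker]
      refine Subtype.ext ?_
      show (QuotientGroup.mk (f u) : kˣ ⧸ (powMonoidHom p : kˣ →* kˣ).range) = 1
      exact (QuotientGroup.eq_one_iff _).mpr hq
    rw [selmerGroup.fromUnit_ker] at hker
    exact (QuotientGroup.eq_one_iff _).mpr hker
  · ext q
    constructor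
    · rintro ⟨w, rfl⟩
      obtain ⟨u, rfl⟩ := QuotientGroup.mk_surjective w
      rw [MonoidHom.mem_ker, QuotientGroup.map_mk, QuotientGroup.lift_mk]
      show Multiplicative.ofAdd (Dfun k p (f u)) = 1
      have hD : Dfun k p (f u) = 0 := DFinsupp.ext fun v => by
        rw [Dfun_apply, addVal_unit]
        simp
      rw [hD, ofAdd_zero]
    · intro hq
      obtain ⟨a, rfl⟩ := QuotientGroup.mk_surjective q
      rw [MonoidHom.mem_ker, QuotientGroup.lift_mk] at hq
      have hD : Dfun k p a = 0 := by
        have : Multiplicative.ofAdd (Dfun k p a) = Multiplicative.ofAdd (0 : ⨁ _v : HeightOneSpectrum (𝓞 k), ZMod p) := by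
          rw [ofAdd_zero]; exact hq
        exact Multiplicative.ofAdd.injective this
      have ha : ∀ v, (p : ℤ) ∣ addVal k v a := fun v => by
        have := congrArg (fun g => DFinsupp.toFun g v) hD
        rw [← ZMod.intCast_zmod_eq_zero_iff_dvd]
        have h2 : Dfun k p a v = 0 := by
          rw [hD]; rfl
        rw [Dfun_apply] at h2
        exact h2
      obtain ⟨u, b, rfl⟩ := exists_pth_root_ideal k p hp hcl a ha
      refine ⟨QuotientGroup.mk u, ?_⟩
      rw [QuotientGroup.map_mk, QuotientGroup.mk_mul]
      have hb : (QuotientGroup.mk (b ^ p) : kˣ ⧸ pPowers kˣ p) = 1 :=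
        (QuotientGroup.eq_one_iff _).mpr ⟨b, rfl⟩
      rw [hb, mul_one]
  · intro y
    set h := Nat.card (ClassGroup (𝓞 k)) with hh
    have hh0 : ((h : ZMod p)) ≠ 0 := by
      intro hzero
      exact hcl ((ZMod.natCast_eq_zero_iff h p).mp hzero)
    set m : ℕ := ((h : ZMod p)⁻¹).val with hm
    have hhm : ((h * m : ℕ) : ZMod p) = 1 := by
      push_cast
      rw [hm, ZMod.natCast_val, ZMod.cast_id]
      exact mul_inv_cancel₀ hh0
    set d : ⨁ _v : HeightOneSpectrum (𝓞 k), ZMod p := Multiplicative.toAdd y with hd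
    have hmem : ∀ v, v ∈ DFinsupp.support d ↔ ((d v).val : ℤ) ≠ 0 := fun v => by
      simp only [DFinsupp.mem_support_iff, ne_eq, Int.natCast_eq_zero, ZMod.val_eq_zero]
    set exps : HeightOneSpectrum (𝓞 k) →₀ ℤ :=
      ⟨DFinsupp.support d, fun v => ((d v).val : ℤ), hmem⟩ with hexps
    obtain ⟨a0, ha0⟩ := exists_gen k exps
    refine ⟨QuotientGroup.mk (a0 ^ m), ?_⟩
    rw [QuotientGroup.lift_mk]
    show Multiplicative.ofAdd (Dfun k p (a0 ^ m)) = y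
    have hDa : Dfun k p (a0 ^ m) = d := DFinsupp.ext fun v => by
      rw [Dfun_apply, addVal_pow, ha0 v]
      show ((((m : ℤ)) * ((h : ℤ) * ((d v).val : ℤ)) : ℤ) : ZMod p) = d v
      push_cast
      rw [show ((m : ZMod p) * ((h : ZMod p) * ((d v).val : ZMod p)))
          = ((h * m : ℕ) : ZMod p) * ((d v).val : ZMod p) by push_cast; ring, hhm, one_mul,
        ZMod.natCast_val, ZMod.cast_id]
    rw [hDa, hd, ofAdd_toAdd]
end
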